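/- (Backtracking lemma) Let u_0, …, u_n be points of a tree T such that (1) u_i ≠ u_{i+1} for all 0 ≤ i ≤ n−1; (2) for each 1 ≤ i ≤ n−1, the intersection [u_{i−1}, u_i] ∩ [u_i, u_{i+1}] is strictly contained in [u_{i−1}, u_i] and strictly contained in [u_i, u_{i+1}]; (3) for each 1 ≤ i ≤ n−2, [u_{i−1}, u_i] ∩ [u_i, u_{i+1}] ∩ [u_{i+1}, u_{i+2}] = ∅. Then for all i, j with |j − i| ≥ 2, the arcs [u_{i−1}, u_i] and [u_{j−1}, u_j] are disjoint. -/

import Mathlib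

open SimpleGraph

noncomputable def seg {V : Type*} {T : SimpleGraph V} (hT : T.IsTree) (x y : V) : Set V :=
  {z | z ∈ ((hT.existsUnique_path x y).exists.choose).support}

/-- A set of vertices is convex (a subtree) if it contains the arc between
any two of its points. -/
def IsSubtree {V : Type*} {T : SimpleGraph V} (hT : T.IsTree) (S : Set V) : Prop :=
  ∀ x ∈ S, ∀ y ∈ S, seg hT x y ⊆ S

namespace Backtrack

variable {V : Type*} {T : SimpleGraph V} (hT : T.IsTree)

lemma seg_eq {x y : V} (p : T.Walk x y) (hp : p.IsPath) :
    seg hT x y = {z | z ∈ p.support} := by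
  have h := hT.existsUnique_path x y
  have : h.exists.choose = p := h.unique h.exists.choose_spec hp
  simp [seg, this]

lemma left_mem_seg (x y : V) : x ∈ seg hT x y := Walk.start_mem_support _

lemma right_mem_seg (x y : V) : y ∈ seg hT x y := Walk.end_mem_support _

lemma seg_symm (x y : V) : seg hT x y = seg hT y x := by
  have h := hT.existsUnique_path x y
  rw [seg_eq hT (h.exists.choose.reverse) (h.exists.choose_spec.reverse)]
  ext z
  simp [seg, Walk.support_reverse]

lemma seg_subset_walk {x y : V} (w : T.Walk x y) :
    seg hT x y ⊆ {z | z ∈ w.support} := by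
  classical
  rw [seg_eq hT w.bypass w.bypass_isPath]
  intro z hz
  exact w.support_bypass_subset hz

lemma seg_triangle (x c y : V) : seg hT x y ⊆ seg hT x c ∪ seg hT c y := by
  have h1 := hT.existsUnique_path x c
  have h2 := hT.existsUnique_path c y
  intro z hz
  have := seg_subset_walk hT (h1.exists.choose.append h2.exists.choose) hz
  simp only [Set.mem_setOf_eq, Walk.mem_support_append_iff] at this
  exact this

lemma seg_convex_right {x y p : V} (h : p ∈ seg hT x y) : seg hT p y ⊆ seg hT x y := by
  classical
  have hh := hT.existsUnique_path x y
  have hp : p ∈ hh.exists.choose.support := h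
  rw [seg_eq hT (hh.exists.choose.dropUntil p hp) (hh.exists.choose_spec.dropUntil hp)]
  intro z hz
  exact Walk.support_dropUntil_subset _ hp hz

lemma seg_convex_left {x y p : V} (h : p ∈ seg hT x y) : seg hT x p ⊆ seg hT x y := by
  rw [seg_symm hT x p, seg_symm hT x y]
  rw [seg_symm hT x y] at h
  exact seg_convex_right hT h

lemma exists_tail (S : Set V) : ∀ {a b : V} (w : T.Walk a b), w.IsPath →
    (∃ v ∈ w.support, v ∈ S) →
    ∃ m, m ∈ S ∧ ∃ w₂ : T.Walk m b, w₂.IsPath ∧ (∀ v ∈ w₂.support, v ∈ w.support) ∧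
      (∀ v ∈ w₂.support, v ∈ S → v = m) := by
  intro a b w
  induction w with
  | nil =>
    intro _ hv
    simp only [Walk.support_nil, List.mem_singleton] at hv
    obtain ⟨v, rfl, hvS⟩ := hv
    exact ⟨v, hvS, Walk.nil, Walk.IsPath.nil, by simp, by simp⟩
  | cons h w ih =>
    intro hp hv
    by_cases hc : ∃ v ∈ w.support, v ∈ S
    · obtain ⟨m, hmS, w₂, hw₂, hsub, hmin⟩ := ih hp.of_cons hc
      exact ⟨m, hmS, w₂, hw₂, fun v hv' => by simp [hsub v hv'], hmin⟩
    · push_neg at hc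
      obtain ⟨v, hv', hvS⟩ := hv
      simp only [Walk.support_cons, List.mem_cons] at hv'
      rcases hv' with rfl | hv'
      · refine ⟨v, hvS, Walk.cons h w, hp, fun x hx => hx, ?_⟩
        intro x hx hxS
        simp only [Walk.support_cons, List.mem_cons] at hx
        rcases hx with rfl | hx
        · rfl
        · exact absurd hxS (hc x hx)
      · exact absurd hvS (hc v hv')

lemma isPath_append_of {a b c : V} {p : T.Walk a b} {q : T.Walk b c}
    (hp : p.IsPath) (hq : q.IsPath) (h : ∀ v ∈ p.support, v ∈ q.support → v = b) :
    (p.append q).IsPath := by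
  rw [Walk.isPath_def, Walk.support_append, List.nodup_append]
  refine ⟨hp.support_nodup, ?_, ?_⟩
  · have := hq.support_nodup
    rw [q.support_eq_cons] at this
    exact this.of_cons
  · intro v hv v' hv' hvv'
    subst hvv'
    have hbq : b ∉ q.support.tail := by
      have := hq.support_nodup
      rw [q.support_eq_cons, List.nodup_cons] at this
      exact this.1
    have : v = b := h v hv (List.mem_of_mem_tail hv')
    subst this
    exact hbq hv'

lemma median (x y z : V) : ∃ m, m ∈ seg hT x y ∧ m ∈ seg hT x z ∧ m ∈ seg hT y z := by
  classical
  have hh := hT.existsUnique_path x y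
  set w := hh.exists.choose with hw
  have hwp : w.IsPath := hh.exists.choose_spec
  have hx : x ∈ w.support := w.start_mem_support
  obtain ⟨m, hmS, w₂, hw₂p, hsub, hmin⟩ :=
    exists_tail (seg hT x z) w hwp ⟨x, hx, left_mem_seg hT x z⟩
  refine ⟨m, ?_, hmS, ?_⟩
  · exact hsub m w₂.start_mem_support
  · -- m ∈ seg y z
    have hq := hT.existsUnique_path z m
    set q := hq.exists.choose with hqdef
    have hqp : q.IsPath := hq.exists.choose_spec
    have hqsupp : ∀ v ∈ q.support, v ∈ seg hT x z := by
      intro v hv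
      have hzm : seg hT z m ⊆ seg hT x z := by
        have : seg hT m z ⊆ seg hT x z := seg_convex_right hT hmS
        rw [seg_symm hT z m]; exact this
      exact hzm hv
    have hpath : (q.append w₂).IsPath := by
      refine isPath_append_of hqp hw₂p ?_
      intro v hv hv'
      exact hmin v hv' (hqsupp v hv)
    rw [seg_symm hT y z, seg_eq hT (q.append w₂) hpath]
    simp only [Set.mem_setOf_eq, Walk.mem_support_append_iff]
    exact Or.inl q.end_mem_support

lemma chain (u : ℕ → V) (a : ℕ) : ∀ b, a < b →
    seg hT (u a) (u b) ⊆ ⋃ k ∈ Set.Icc (a + 1) b, seg hT (u (k - 1)) (u k) := by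
  intro b hb
  induction b, hb using Nat.le_induction with
  | base =>
    intro z hz
    refine Set.mem_biUnion (Set.mem_Icc.2 ⟨le_refl _, le_refl _⟩) ?_
    simpa using hz
  | succ b hb ih =>
    intro z hz
    rcases seg_triangle hT (u a) (u b) (u (b + 1)) hz with h | h
    · obtain ⟨k, hk, hk2⟩ := Set.mem_iUnion₂.1 (ih h)
      exact Set.mem_biUnion (Set.mem_Icc.2 ⟨(Set.mem_Icc.1 hk).1, (Set.mem_Icc.1 hk).2.trans (Nat.le_succ b)⟩) hk2
    · refine Set.mem_biUnion (Set.mem_Icc.2 ⟨by omega, le_refl _⟩) ?_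
      simpa using h

end Backtrack

/-- Backtracking lemma: under the three hypotheses, arcs whose indices differ by
at least `2` are disjoint. -/
theorem backtracking_lemma {V : Type*} {T : SimpleGraph V} (hT : T.IsTree)
    (n : ℕ) (u : ℕ → V)
    (h1 : ∀ i, i < n → u i ≠ u (i + 1))
    (h2 : ∀ i, 1 ≤ i → i < n →
      seg hT (u (i - 1)) (u i) ∩ seg hT (u i) (u (i + 1)) ⊂ seg hT (u (i - 1)) (u i) ∧
      seg hT (u (i - 1)) (u i) ∩ seg hT (u i) (u (i + 1)) ⊂ seg hT (u i) (u (i + 1)))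
    (h3 : ∀ i, 1 ≤ i → i + 2 ≤ n →
      seg hT (u (i - 1)) (u i) ∩ seg hT (u i) (u (i + 1)) ∩ seg hT (u (i + 1)) (u (i + 2)) = ∅) :
    ∀ i j, 1 ≤ i → 1 ≤ j → i ≤ n → j ≤ n → (i + 2 ≤ j ∨ j + 2 ≤ i) →
      Disjoint (seg hT (u (i - 1)) (u i)) (seg hT (u (j - 1)) (u j)) := by
  have aux : ∀ d i j, 1 ≤ i → j ≤ n → i + 2 ≤ j → j - i = d →
      Disjoint (seg hT (u (i - 1)) (u i)) (seg hT (u (j - 1)) (u j)) := by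
    intro d
    induction d using Nat.strong_induction_on with
    | _ d ih =>
      intro i j hi hjn hij hd
      rw [Set.disjoint_left]
      intro p hpA hpB
      obtain ⟨m, hm1, hm2, hm3⟩ := Backtrack.median hT (u i) (u (j - 1)) p
      have hmA : m ∈ seg hT (u (i - 1)) (u i) := by
        rw [Backtrack.seg_symm hT (u i) p] at hm2
        exact Backtrack.seg_convex_right hT hpA hm2
      have hmB : m ∈ seg hT (u (j - 1)) (u j) :=
        Backtrack.seg_convex_left hT hpB hm3
      have hchain := Backtrack.chain hT u i (j - 1) (by omega) hm1
      obtain ⟨k, hk, hmk⟩ := Set.mem_iUnion₂.1 hchain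
      rw [Set.mem_Icc] at hk
      by_cases hki : k = i + 1
      · subst hki
        have e1 : i + 1 - 1 = i := by omega
        rw [e1] at hmk
        by_cases hji : j = i + 2
        · have h3i := h3 i hi (by omega)
          have hm : m ∈ (seg hT (u (i - 1)) (u i) ∩ seg hT (u i) (u (i + 1))) ∩
              seg hT (u (i + 1)) (u (i + 2)) := by
            refine ⟨⟨hmA, hmk⟩, ?_⟩
            have e2 : j - 1 = i + 1 := by omega
            rw [e2, hji] at hmB
            exact hmB
          rw [h3i] at hm
          exact hm
        · have hdis := ih (j - (i + 1)) (by omega) (i + 1) j (by omega) hjn (by omega) rfl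
          have e1' : i + 1 - 1 = i := by omega
          rw [e1'] at hdis
          exact (Set.disjoint_left.1 hdis) hmk hmB
      · have hdis := ih (k - i) (by omega) i k hi (by omega) (by omega) rfl
        exact (Set.disjoint_left.1 hdis) hmA hmk
  intro i j hi hj hin hjn hij
  rcases hij with h | h
  · exact aux (j - i) i j hi hjn h rfl
  · exact (aux (i - j) j i hj hin h rfl).symm
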